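/- For every i = 0, …, n one has the identity S'_{2i} + (φ_{2i+1}/α_{2i+1}) · S'_{2i+2} = (1 + φ_{2i}/α_{2i}) · S'_{2i+1}. -/
import Mathlib


open Finset

/-- `S'_x` (the same formula covers both even and odd indices `x` of `ZMod (2n+2)`):
for `x = 2i` this is `S'_{2i}` and for `x = 2i+1` this is `S'_{2i+1}`. -/
noncomputable def Sp (n : ℕ) {K : Type*} [Field K] (α φ : ZMod (2*n+2) → K)
    (x : ZMod (2*n+2)) : K :=
  ∑ j ∈ range (n+1),
    (∏ k ∈ range j, (φ (x + 2*k) / α (x + 2*k)) * (φ (x + 2*k + 1) / α (x + 2*k + 1)))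
      * (1 + φ (x + 2*j) / α (x + 2*j))

/-- Partial product `∏_{k<m} φ(x+k)/α(x+k)`. -/
noncomputable def Gp (n : ℕ) {K : Type*} [Field K] (α φ : ZMod (2*n+2) → K)
    (x : ZMod (2*n+2)) (m : ℕ) : K :=
  ∏ k ∈ range m, φ (x + k) / α (x + k)

lemma Gp_zero (n : ℕ) {K : Type*} [Field K] (α φ : ZMod (2*n+2) → K)
    (x : ZMod (2*n+2)) : Gp n α φ x 0 = 1 := by simp [Gp]

lemma Gp_succ (n : ℕ) {K : Type*} [Field K] (α φ : ZMod (2*n+2) → K)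
    (x : ZMod (2*n+2)) (m : ℕ) :
    Gp n α φ x (m+1) = Gp n α φ x m * (φ (x + m) / α (x + m)) :=
  prod_range_succ _ _

lemma Gp_shift (n : ℕ) {K : Type*} [Field K] (α φ : ZMod (2*n+2) → K)
    (x : ZMod (2*n+2)) (m : ℕ) :
    Gp n α φ x (m+1) = (φ x / α x) * Gp n α φ (x+1) m := by
  rw [Gp, Gp, prod_range_succ', Nat.cast_zero, add_zero, mul_comm]
  congr 1
  refine prod_congr rfl fun k _ => ?_
  push_cast
  ring_nf

lemma Gp_pair (n : ℕ) {K : Type*} [Field K] (α φ : ZMod (2*n+2) → K)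
    (x : ZMod (2*n+2)) (j : ℕ) :
    ∏ k ∈ range j, (φ (x + 2*k) / α (x + 2*k)) * (φ (x + 2*k + 1) / α (x + 2*k + 1))
      = Gp n α φ x (2*j) := by
  induction j with
  | zero => simp [Gp]
  | succ j ih =>
    rw [prod_range_succ, ih, show 2*(j+1) = (2*j+1)+1 by ring, Gp_succ, Gp_succ]
    push_cast
    ring_nf

lemma Sp_eq (n : ℕ) {K : Type*} [Field K] (α φ : ZMod (2*n+2) → K)
    (x : ZMod (2*n+2)) :
    Sp n α φ x = ∑ j ∈ range (n+1), (Gp n α φ x (2*j) + Gp n α φ x (2*j+1)) := by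
  unfold Sp
  refine sum_congr rfl fun j _ => ?_
  rw [Gp_pair, Gp_succ]
  push_cast
  ring_nf

/-- `S'_{2i} + (φ_{2i+1}/α_{2i+1}) S'_{2i+2} = (1 + φ_{2i}/α_{2i}) S'_{2i+1}`
for `i = 0, …, n`. -/
theorem stmt1 (n : ℕ) (hn : 1 ≤ n) (K : Type*) [Field K]
    (α φ : ZMod (2*n+2) → K) (hα : ∀ i, α i ≠ 0) (hφ : ∀ i, φ i ≠ 0) :
    ∀ i : ℕ, i ≤ n →
      Sp n α φ (2*i) + (φ (2*i+1) / α (2*i+1)) * Sp n α φ (2*i+2)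
        = (1 + φ (2*i) / α (2*i)) * Sp n α φ (2*i+1) := by
  suffices H : ∀ x : ZMod (2*n+2),
      Sp n α φ x + (φ (x+1) / α (x+1)) * Sp n α φ (x+1+1)
        = (1 + φ x / α x) * Sp n α φ (x+1) by
    intro i _
    rw [show (2*(i:ZMod (2*n+2))+2) = 2*(i:ZMod (2*n+2))+1+1 by ring]
    exact H (2*(i : ZMod (2*n+2)))
  intro x
  have hr0 : φ x / α x ≠ 0 := div_ne_zero (hφ x) (hα x)
  apply mul_left_cancel₀ hr0
  have A : (φ x / α x) * Sp n α φ (x+1)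
      = ∑ j ∈ range (n+1), (Gp n α φ x (2*j+1) + Gp n α φ x (2*j+1+1)) := by
    rw [Sp_eq, mul_sum]
    refine sum_congr rfl fun j _ => ?_
    rw [mul_add, ← Gp_shift, ← Gp_shift]
  have B : (φ x / α x) * ((φ (x+1) / α (x+1)) * Sp n α φ (x+1+1))
      = ∑ j ∈ range (n+1),
          (Gp n α φ x (2*j+1+1) + Gp n α φ x (2*j+1+1+1)) := by
    rw [Sp_eq, mul_sum, mul_sum]
    refine sum_congr rfl fun j _ => ?_
    rw [mul_add, mul_add, ← Gp_shift, ← Gp_shift, ← Gp_shift, ← Gp_shift]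
  rw [mul_add, show (φ x / α x) * ((1 + φ x / α x) * Sp n α φ (x+1))
      = (1 + φ x / α x) * ((φ x / α x) * Sp n α φ (x+1)) by ring, A, B,
    Sp_eq n α φ x, mul_sum, mul_sum, ← sum_add_distrib, ← sub_eq_zero,
    ← sum_sub_distrib]
  have hf : ∀ j ∈ range (n+1),
      (φ x / α x) * (Gp n α φ x (2*j) + Gp n α φ x (2*j+1))
        + (Gp n α φ x (2*j+1+1) + Gp n α φ x (2*j+1+1+1))
        - (1 + φ x / α x) * (Gp n α φ x (2*j+1) + Gp n α φ x (2*j+1+1))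
      = (fun j => (φ x / α x) * Gp n α φ x (2*j) - Gp n α φ x (2*j+1)) j
        - (fun j => (φ x / α x) * Gp n α φ x (2*j) - Gp n α φ x (2*j+1)) (j+1) := by
    intro j _
    simp only [show 2*(j+1) = 2*j+1+1 from by ring]
    ring
  rw [sum_congr rfl hf, Finset.sum_range_sub']
  simp only [show 2*(n+1) = 2*n+2 from by ring, Nat.mul_zero, Gp_zero, Gp_succ,
    Nat.cast_zero, add_zero, ZMod.natCast_self]
  ring
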